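/- Let g be holomorphic and bounded on Π₊ and fix z₀ ∈ Π₊. If I_g f(z) = ∫_{z₀}^{z} f'(ζ) g(ζ) dζ is bounded from H²(Π₊) to B_∞(Π₊), then sup_{z ∈ Π₊} |g(z)|/(Im z)^{1/2} < ∞. -/

import Mathlib

open Complex MeasureTheory Filter

noncomputable section

/-- The upper half-plane. -/
def UH : Set ℂ := {z : ℂ | 0 < z.im}

/-- The integral means on horizontal lines. -/
def hardySq (f : ℂ → ℂ) (y : ℝ) : ℝ := ∫ x : ℝ, ‖f (x + y * Complex.I)‖ ^ 2

/-- Membership in the Hardy space H²(Π₊). -/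
def MemH2 (f : ℂ → ℂ) : Prop :=
  DifferentiableOn ℂ f UH ∧ BddAbove (Set.range fun y : Set.Ioi (0:ℝ) => hardySq f y)

/-- The H² norm. -/
def hardyNorm (f : ℂ → ℂ) : ℝ := Real.sqrt (⨆ y : Set.Ioi (0:ℝ), hardySq f y)

/-- The Bloch seminorm B(f). -/
def blochSemi (f : ℂ → ℂ) : ℝ := ⨆ z : UH, (z : ℂ).im * ‖deriv f (z : ℂ)‖

/-- The Bloch norm ‖f‖ = |f(i)| + B(f). -/
def blochNorm (f : ℂ → ℂ) : ℝ := ‖f Complex.I‖ + blochSemi f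

/-- J_g f(z) = ∫_{z₀}^z f ζ * g' ζ dζ, along the segment (Π₊ is convex). -/
def Jg (g f : ℂ → ℂ) (z₀ z : ℂ) : ℂ :=
  ∫ t in (0:ℝ)..(1:ℝ), f (z₀ + t • (z - z₀)) * deriv g (z₀ + t • (z - z₀)) * (z - z₀)

/-- I_g f(z) = ∫_{z₀}^z f' ζ * g ζ dζ, along the segment. -/
def Ig (g f : ℂ → ℂ) (z₀ z : ℂ) : ℂ :=
  ∫ t in (0:ℝ)..(1:ℝ), deriv f (z₀ + t • (z - z₀)) * g (z₀ + t • (z - z₀)) * (z - z₀)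

/-- The test functions f_w. -/
def fw (w : ℂ) : ℂ → ℂ := fun z =>
  ((w.im ^ ((3:ℝ)/2) : ℝ) : ℂ) / ((Real.sqrt Real.pi : ℂ) * (z - (starRingEnd ℂ) w) ^ 2)

end

noncomputable section
open Metric intervalIntegral Set Topology

lemma isOpen_UH : IsOpen UH := isOpen_lt continuous_const Complex.continuous_im

lemma seg_mem_UH {z₀ x : ℂ} (h0 : z₀ ∈ UH) (hx : x ∈ UH) {t : ℝ} (ht : t ∈ Set.Icc (0:ℝ) 1) :
    z₀ + t • (x - z₀) ∈ UH := by
  have h0' : 0 < z₀.im := h0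
  have hx' : 0 < x.im := hx
  obtain ⟨ht0, ht1⟩ := ht
  show 0 < (z₀ + t • (x - z₀)).im
  simp only [Complex.add_im, Complex.smul_im, Complex.sub_im]
  simp only [smul_eq_mul]
  rcases le_total z₀.im x.im with hc|hc <;> nlinarith

lemma hasDerivAt_segInt {h : ℂ → ℂ} (hh : DifferentiableOn ℂ h UH) {z₀ z : ℂ}
    (hz₀ : z₀ ∈ UH) (hz : z ∈ UH) :
    HasDerivAt (fun z => ∫ t in (0:ℝ)..(1:ℝ), h (z₀ + t • (z - z₀)) * (z - z₀)) (h z) z := by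
  have han : AnalyticOnNhd ℂ h UH := hh.analyticOnNhd isOpen_UH
  have hdh : ContinuousOn (deriv h) UH := han.deriv.continuousOn
  have hch : ContinuousOn h UH := hh.continuousOn
  obtain ⟨ε, εpos, hε⟩ := Metric.nhds_basis_closedBall.mem_iff.1 (isOpen_UH.mem_nhds hz)
  set L : ℂ → ℝ → ℂ := fun x t => z₀ + t • (x - z₀) with hL
  have hmemK : ∀ x ∈ closedBall z ε, ∀ t ∈ Icc (0:ℝ) 1, L x t ∈ UH :=
    fun x hx t ht => seg_mem_UH hz₀ (hε hx) ht
  set K : Set ℂ := (fun p : ℝ × ℂ => z₀ + p.1 • (p.2 - z₀)) '' (Icc (0:ℝ) 1 ×ˢ closedBall z ε)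
    with hKdef
  have hKc : IsCompact K := ((isCompact_Icc).prod (isCompact_closedBall _ _)).image
    (by fun_prop)
  have hKU : K ⊆ UH := by
    rintro _ ⟨⟨t, x⟩, ⟨ht, hx⟩, rfl⟩
    exact hmemK x hx t ht
  obtain ⟨A, hA⟩ := hKc.exists_bound_of_continuousOn (hch.mono hKU)
  obtain ⟨B, hB⟩ := hKc.exists_bound_of_continuousOn (hdh.mono hKU)
  set F : ℂ → ℝ → ℂ := fun x t => h (L x t) * (x - z₀) with hF
  set F' : ℂ → ℝ → ℂ := fun x t => deriv h (L x t) * (t:ℂ) * (x - z₀) + h (L x t) with hF'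
  have hLcont : ∀ x : ℂ, ContinuousOn (fun t : ℝ => L x t) (Icc 0 1) := by
    intro x; fun_prop
  have hsub : Set.uIoc (0:ℝ) 1 ⊆ Icc (0:ℝ) 1 := by
    rw [uIoc_of_le zero_le_one]; exact Ioc_subset_Icc_self
  have hFc : ∀ x ∈ closedBall z ε, ContinuousOn (F x) (Icc 0 1) := by
    intro x hx
    exact ((hch.comp (hLcont x) (fun t ht => hmemK x hx t ht)).mul continuousOn_const)
  have hF'c : ∀ x ∈ closedBall z ε, ContinuousOn (F' x) (Icc 0 1) := by
    intro x hx
    have h1 : ContinuousOn (fun t : ℝ => deriv h (L x t)) (Icc 0 1) :=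
      hdh.comp (hLcont x) (fun t ht => hmemK x hx t ht)
    have h2 : ContinuousOn (fun t : ℝ => h (L x t)) (Icc 0 1) :=
      hch.comp (hLcont x) (fun t ht => hmemK x hx t ht)
    exact ((h1.mul (Complex.continuous_ofReal.continuousOn)).mul continuousOn_const).add h2
  have hzcb : z ∈ closedBall z ε := mem_closedBall_self εpos.le
  have hF_meas : ∀ᶠ x in 𝓝 z, AEStronglyMeasurable (F x) (volume.restrict (Set.uIoc (0:ℝ) 1)) := by
    filter_upwards [closedBall_mem_nhds z εpos] with x hx
    exact ((hFc x hx).mono hsub).aestronglyMeasurable measurableSet_uIoc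
  have hF_int : IntervalIntegrable (F z) volume 0 1 := by
    apply ContinuousOn.intervalIntegrable
    rw [uIcc_of_le zero_le_one]; exact hFc z hzcb
  have hF'_meas : AEStronglyMeasurable (F' z) (volume.restrict (Set.uIoc (0:ℝ) 1)) :=
    ((hF'c z hzcb).mono hsub).aestronglyMeasurable measurableSet_uIoc
  have h_bound : ∀ᵐ t ∂(volume : Measure ℝ), t ∈ Set.uIoc (0:ℝ) 1 → ∀ x ∈ ball z ε,
      ‖F' x t‖ ≤ |B| * (‖z - z₀‖ + ε) + |A| := by
    refine Filter.Eventually.of_forall (fun t ht x hx => ?_)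
    have htI : t ∈ Icc (0:ℝ) 1 := hsub ht
    have hxcb : x ∈ closedBall z ε := ball_subset_closedBall hx
    have hLK : L x t ∈ K := ⟨(t, x), ⟨htI, hxcb⟩, rfl⟩
    have h1 : ‖deriv h (L x t)‖ ≤ |B| := (hB _ hLK).trans (le_abs_self B)
    have h2 : ‖h (L x t)‖ ≤ |A| := (hA _ hLK).trans (le_abs_self A)
    have h3 : ‖(t:ℂ)‖ ≤ 1 := by
      rw [Complex.norm_real, Real.norm_eq_abs, abs_le]; exact ⟨by linarith [htI.1], htI.2⟩
    have h4 : ‖x - z₀‖ ≤ ‖z - z₀‖ + ε := by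
      calc ‖x - z₀‖ ≤ ‖x - z‖ + ‖z - z₀‖ := by
            simpa using norm_add_le (x - z) (z - z₀)
        _ ≤ ‖z - z₀‖ + ε := by
            have := mem_closedBall_iff_norm.1 hxcb
            linarith
    calc ‖F' x t‖ ≤ ‖deriv h (L x t) * (t:ℂ) * (x - z₀)‖ + ‖h (L x t)‖ := norm_add_le _ _
      _ = ‖deriv h (L x t)‖ * ‖(t:ℂ)‖ * ‖x - z₀‖ + ‖h (L x t)‖ := by rw [norm_mul, norm_mul]
      _ ≤ |B| * (‖z - z₀‖ + ε) + |A| := by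
          have := norm_nonneg (deriv h (L x t))
          have := norm_nonneg ((t:ℂ))
          have := norm_nonneg (x - z₀)
          have := norm_nonneg (h (L x t))
          have hε0 : (0:ℝ) ≤ ‖z - z₀‖ + ε := by positivity
          have e1 : ‖deriv h (L x t)‖ * ‖(t:ℂ)‖ ≤ |B| := by nlinarith [abs_nonneg B]
          have e2 : ‖deriv h (L x t)‖ * ‖(t:ℂ)‖ * ‖x - z₀‖ ≤ |B| * (‖z - z₀‖ + ε) :=
            mul_le_mul e1 h4 (norm_nonneg _) (abs_nonneg B)
          linarith
  have bound_int : IntervalIntegrable (fun _ : ℝ => |B| * (‖z - z₀‖ + ε) + |A|) volume 0 1 :=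
    intervalIntegrable_const
  have h_diff : ∀ᵐ t ∂(volume : Measure ℝ), t ∈ Set.uIoc (0:ℝ) 1 → ∀ x ∈ ball z ε,
      HasDerivAt (fun x => F x t) (F' x t) x := by
    refine Filter.Eventually.of_forall (fun t ht x hx => ?_)
    have htI : t ∈ Icc (0:ℝ) 1 := hsub ht
    have hxcb : x ∈ closedBall z ε := ball_subset_closedBall hx
    have hLd : HasDerivAt (fun x => L x t) ((t:ℂ)) x := by
      have : (fun x : ℂ => L x t) = fun x => z₀ + (t:ℂ) * (x - z₀) := by
        funext x; simp [hL, Complex.real_smul]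
      rw [this]
      simpa using (((hasDerivAt_id x).sub_const z₀).const_mul (t:ℂ)).const_add z₀
    have hhd : HasDerivAt h (deriv h (L x t)) (L x t) :=
      (hh.differentiableAt (isOpen_UH.mem_nhds (hmemK x hxcb t htI))).hasDerivAt
    have hcomp : HasDerivAt (fun x => h (L x t)) (deriv h (L x t) * (t:ℂ)) x :=
      hhd.comp x hLd
    have := hcomp.mul ((hasDerivAt_id x).sub_const z₀)
    refine this.congr_deriv ?_
    simp [hF']
  have key : (∫ t in (0:ℝ)..(1:ℝ), F' z t) = h z := by
    have hL' : ∀ t : ℝ, HasDerivAt (fun t : ℝ => L z t) (z - z₀) t := by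
      intro t
      have : (fun t : ℝ => L z t) = fun t : ℝ => z₀ + (t:ℂ) * (z - z₀) := by
        funext t; simp [hL, Complex.real_smul]
      rw [this]
      have h1 : HasDerivAt (fun t : ℝ => (t:ℂ)) 1 t := by
        simpa using (hasDerivAt_id t).ofReal_comp
      simpa using (h1.mul_const (z - z₀)).const_add z₀
    have hderiv : ∀ t ∈ uIcc (0:ℝ) 1, HasDerivAt (fun t : ℝ => (t:ℂ) * h (L z t)) (F' z t) t := by
      intro t ht
      rw [uIcc_of_le zero_le_one] at ht
      have h1 : HasDerivAt (fun t : ℝ => (t:ℂ)) 1 t := by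
        simpa using (hasDerivAt_id t).ofReal_comp
      have hhd : HasDerivAt h (deriv h (L z t)) (L z t) :=
        (hh.differentiableAt (isOpen_UH.mem_nhds (hmemK z hzcb t ht))).hasDerivAt
      have h2 : HasDerivAt (fun t : ℝ => h (L z t)) ((z - z₀) • deriv h (L z t)) t :=
        hhd.scomp t (hL' t)
      have := h1.mul h2
      refine this.congr_deriv ?_
      simp only [hF', smul_eq_mul, one_mul]
      ring
    have hint : IntervalIntegrable (F' z) volume 0 1 := by
      apply ContinuousOn.intervalIntegrable
      rw [uIcc_of_le zero_le_one]; exact hF'c z hzcb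
    have := intervalIntegral.integral_eq_sub_of_hasDerivAt hderiv hint
    rw [this]
    simp [hL]
  have main := (intervalIntegral.hasDerivAt_integral_of_dominated_loc_of_deriv_le (ball_mem_nhds z εpos) hF_meas
    hF_int hF'_meas h_bound bound_int h_diff).2
  rw [key] at main
  exact main

lemma aux_integrable {r a : ℝ} (ha : 0 < a) :
    Integrable (fun x : ℝ => ((x - r)^2 + a^2)⁻¹) := by
  have h0 : Integrable (fun x : ℝ => (1 + x^2)⁻¹) := integrable_inv_one_add_sq
  have h1 : Integrable (fun x : ℝ => (1 + (a⁻¹ * x)^2)⁻¹) := by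
    exact (MeasureTheory.integrable_comp_mul_left_iff (fun x : ℝ => (1 + x^2)⁻¹)
      (inv_ne_zero ha.ne')).2 h0
  have h2 : Integrable (fun x : ℝ => (1 + (a⁻¹ * (x - r))^2)⁻¹) := h1.comp_sub_right r
  have h3 : Integrable (fun x : ℝ => (a^2)⁻¹ * (1 + (a⁻¹ * (x - r))^2)⁻¹) := h2.const_mul _
  convert h3 using 2 with x
  field_simp
  ring

lemma aux_integral {r a : ℝ} (ha : 0 < a) :
    ∫ x : ℝ, ((x - r)^2 + a^2)⁻¹ = Real.pi / a := by
  have key : (fun x : ℝ => ((x - r)^2 + a^2)⁻¹)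
      = fun x : ℝ => (a^2)⁻¹ * (1 + (a⁻¹ * (x - r))^2)⁻¹ := by
    funext x; field_simp; ring
  rw [key, MeasureTheory.integral_const_mul]
  rw [MeasureTheory.integral_sub_right_eq_self (fun x : ℝ => (1 + (a⁻¹ * x)^2)⁻¹) r]
  rw [MeasureTheory.Measure.integral_comp_mul_left (fun x : ℝ => (1 + x^2)⁻¹) a⁻¹]
  rw [integral_univ_inv_one_add_sq]
  rw [abs_of_pos (inv_pos.2 (inv_pos.2 ha))]
  simp [smul_eq_mul]
  field_simp

lemma sqrt_pi_ne : (Real.sqrt Real.pi : ℂ) ≠ 0 := by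
  exact Complex.ofReal_ne_zero.2 (Real.sqrt_ne_zero'.2 Real.pi_pos)

lemma sub_conj_ne {w z : ℂ} (hw : w ∈ UH) (hz : z ∈ UH) : z - (starRingEnd ℂ) w ≠ 0 := by
  have h1 : (z - (starRingEnd ℂ) w).im = z.im + w.im := by
    simp [Complex.sub_im, Complex.conj_im]
  intro h
  rw [h] at h1
  have : (0:ℝ) < z.im + w.im := add_pos hz hw
  simp at h1
  linarith

lemma hasDerivAt_fw {w z : ℂ} (hw : w ∈ UH) (hz : z ∈ UH) :
    HasDerivAt (fw w)
      (-2 * ((w.im ^ ((3:ℝ)/2) : ℝ) : ℂ) / ((Real.sqrt Real.pi : ℂ) * (z - (starRingEnd ℂ) w) ^ 3))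
      z := by
  set cw := (starRingEnd ℂ) w
  set c := ((w.im ^ ((3:ℝ)/2) : ℝ) : ℂ)
  set k := (Real.sqrt Real.pi : ℂ)
  have hne : z - cw ≠ 0 := sub_conj_ne hw hz
  have hD : HasDerivAt (fun z => k * (z - cw)^2) (k * (2 * (z - cw))) z := by
    have := (((hasDerivAt_id z).sub_const cw).pow 2).const_mul k
    refine this.congr_deriv ?_
    simp
  have hDne : k * (z - cw)^2 ≠ 0 := mul_ne_zero sqrt_pi_ne (pow_ne_zero 2 hne)
  have := (hasDerivAt_const z c).div hD hDne
  refine this.congr_deriv (Eq.symm ?_)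
  rw [div_eq_div_iff (mul_ne_zero sqrt_pi_ne (pow_ne_zero 3 hne))
    (pow_ne_zero 2 (mul_ne_zero sqrt_pi_ne (pow_ne_zero 2 hne)))]
  ring

lemma fw_norm_sq {w : ℂ} (hw : w ∈ UH) (x y : ℝ) :
    ‖fw w (x + y * Complex.I)‖ ^ 2
      = w.im ^ (3:ℕ) / Real.pi * ((((x - w.re)^2 + (y + w.im)^2)^2)⁻¹) := by
  have hb : (0:ℝ) < w.im := hw
  have hu : ((x:ℂ) + y * Complex.I - (starRingEnd ℂ) w).re = x - w.re := by simp
  have hv : ((x:ℂ) + y * Complex.I - (starRingEnd ℂ) w).im = y + w.im := by simp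
  have hnu : ‖(x:ℂ) + y * Complex.I - (starRingEnd ℂ) w‖ ^ 2
      = (x - w.re)^2 + (y + w.im)^2 := by
    rw [← hu, ← hv, Complex.sq_norm, Complex.normSq_apply]
    ring
  have hc : ‖(((w.im ^ ((3:ℝ)/2) : ℝ)) : ℂ)‖ = w.im ^ ((3:ℝ)/2) := by
    rw [Complex.norm_real, Real.norm_eq_abs, _root_.abs_of_nonneg (Real.rpow_nonneg hb.le _)]
  have hk : ‖(Real.sqrt Real.pi : ℂ)‖ = Real.sqrt Real.pi := by
    rw [Complex.norm_real, Real.norm_eq_abs, _root_.abs_of_nonneg (Real.sqrt_nonneg _)]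
  rw [fw]
  rw [norm_div, norm_mul, norm_pow, hc, hk, hnu]
  rw [div_pow, mul_pow, ← Real.rpow_natCast (w.im ^ ((3:ℝ)/2)) 2, ← Real.rpow_mul hb.le]
  norm_num
  rw [Real.sq_sqrt Real.pi_pos.le]
  rw [div_mul_eq_div_div, div_eq_mul_inv]

lemma hardySq_fw_le {w : ℂ} (hw : w ∈ UH) {y : ℝ} (hy : 0 < y) : hardySq (fw w) y ≤ 1 := by
  have hb : (0:ℝ) < w.im := hw
  set b := w.im
  set r := w.re
  set a := y + b with hadef
  have ha : 0 < a := by positivity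
  set c3 := b ^ (3:ℕ) with hc3
  have hc3nn : 0 ≤ c3 := by positivity
  have hφint : Integrable (fun x : ℝ => c3 / Real.pi * (a^2)⁻¹ * (((x - r)^2 + a^2)⁻¹)) :=
    (aux_integrable ha).const_mul _
  have hle : hardySq (fw w) y
      ≤ ∫ x : ℝ, c3 / Real.pi * (a^2)⁻¹ * (((x - r)^2 + a^2)⁻¹) := by
    apply integral_mono_of_nonneg
    · exact Filter.Eventually.of_forall fun x => by positivity
    · exact hφint
    · refine Filter.Eventually.of_forall fun x => ?_
      dsimp only
      rw [fw_norm_sq hw x y]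
      set q := (x - r)^2 + a^2 with hq
      have hqa : a^2 ≤ q := by nlinarith
      have hq0 : 0 < q := by positivity
      have key : (q^2)⁻¹ ≤ (a^2)⁻¹ * q⁻¹ := by
        rw [← mul_inv]
        apply inv_anti₀ (by positivity)
        nlinarith
      have : c3 / Real.pi * (q^2)⁻¹ ≤ c3 / Real.pi * ((a^2)⁻¹ * q⁻¹) := by
        apply mul_le_mul_of_nonneg_left key (by positivity)
      calc c3 / Real.pi * (q^2)⁻¹ ≤ c3 / Real.pi * ((a^2)⁻¹ * q⁻¹) := this
        _ = c3 / Real.pi * (a^2)⁻¹ * q⁻¹ := by ring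
  have hval : (∫ x : ℝ, c3 / Real.pi * (a^2)⁻¹ * (((x - r)^2 + a^2)⁻¹))
      = c3 / Real.pi * (a^2)⁻¹ * (Real.pi / a) := by
    rw [MeasureTheory.integral_const_mul, aux_integral ha]
  have hba : b ≤ a := by linarith
  have hfin : c3 / Real.pi * (a^2)⁻¹ * (Real.pi / a) ≤ 1 := by
    have heq : c3 / Real.pi * (a^2)⁻¹ * (Real.pi / a) = c3 / a^(3:ℕ) := by
      field_simp
    rw [heq, hc3, div_le_one (by positivity)]
    exact pow_le_pow_left₀ hb.le hba 3
  rw [hval] at hle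
  exact hle.trans hfin

end

theorem stmt9 (g : ℂ → ℂ) (hg : DifferentiableOn ℂ g UH)
    (hgb : ∃ M : ℝ, ∀ z ∈ UH, ‖g z‖ ≤ M)
    (z₀ : ℂ) (hz₀ : z₀ ∈ UH)
    (hbdd : ∃ C : ℝ, 0 < C ∧ ∀ f : ℂ → ℂ, MemH2 f →
      blochNorm (fun z => Ig g f z₀ z) ≤ C * hardyNorm f) :
    ∃ M : ℝ, ∀ z ∈ UH, ‖g z‖ / z.im ^ ((1:ℝ)/2) ≤ M := by
  obtain ⟨Mg, hMg⟩ := hgb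
  obtain ⟨C, hC, hIneq⟩ := hbdd
  set M' : ℝ := max Mg 0 with hM'
  have hM'nn : 0 ≤ M' := le_max_right _ _
  have hgM' : ∀ z ∈ UH, ‖g z‖ ≤ M' := fun z hz => (hMg z hz).trans (le_max_left _ _)
  refine ⟨4 * Real.sqrt Real.pi * C, fun w hw => ?_⟩
  have hb : (0:ℝ) < w.im := hw
  set b := w.im with hbdef
  set sπ := Real.sqrt Real.pi with hsπ
  have hsπ0 : 0 < sπ := Real.sqrt_pos.2 Real.pi_pos
  set cr : ℝ := b ^ ((3:ℝ)/2) with hcr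
  have hcr0 : 0 < cr := Real.rpow_pos_of_pos hb _
  set cw := (starRingEnd ℂ) w with hcw
  set f := fw w with hf
  -- differentiability of f on UH
  have hfdiff : DifferentiableOn ℂ f UH := fun z hz =>
    ((hasDerivAt_fw hw hz).differentiableAt).differentiableWithinAt
  -- MemH2
  have hH2 : MemH2 f := by
    refine ⟨hfdiff, ⟨1, ?_⟩⟩
    rintro _ ⟨⟨y, hy⟩, rfl⟩
    exact hardySq_fw_le hw hy
  -- hardyNorm ≤ 1
  haveI : Nonempty (Set.Ioi (0:ℝ)) := ⟨⟨1, by norm_num⟩⟩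
  have hhn : hardyNorm f ≤ 1 := by
    rw [hardyNorm, show (1:ℝ) = Real.sqrt 1 by simp]
    apply Real.sqrt_le_sqrt
    exact ciSup_le fun y => hardySq_fw_le hw y.2
  have hhn0 : 0 ≤ hardyNorm f := Real.sqrt_nonneg _
  -- the function h = f' * g and its smooth representative
  set φ : ℂ → ℂ := fun z => -2 * (cr:ℂ) / ((sπ:ℂ) * (z - cw) ^ 3) * g z with hφ
  set h : ℂ → ℂ := fun z => deriv f z * g z with hh
  have hEq : ∀ z ∈ UH, h z = φ z := by
    intro z hz
    simp only [hh, hφ, (hasDerivAt_fw hw hz).deriv]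
    exact congrArg (· * g z) (hasDerivAt_fw hw hz).deriv
  have hφdiff : DifferentiableOn ℂ φ UH := by
    intro z hz
    have hne : (sπ:ℂ) * (z - cw)^3 ≠ 0 :=
      mul_ne_zero sqrt_pi_ne (pow_ne_zero 3 (sub_conj_ne hw hz))
    exact (((differentiableAt_const _).div
      (((differentiableAt_id.sub_const cw).pow 3).const_mul _) hne).differentiableWithinAt).mul
      (hg z hz)
  have hhdiff : DifferentiableOn ℂ h UH := hφdiff.congr hEq
  -- derivative of F
  set F : ℂ → ℂ := fun z => Ig g f z₀ z with hF
  have hFd : ∀ z ∈ UH, HasDerivAt F (h z) z := by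
    intro z hz
    exact hasDerivAt_segInt hhdiff hz₀ hz
  -- norm facts
  have hnormφ : ∀ z ∈ UH, ‖h z‖ = 2 * cr / (sπ * ‖z - cw‖^3) * ‖g z‖ := by
    intro z hz
    rw [hEq z hz, hφ]
    have e1 : ‖(-2 * (cr:ℂ))‖ = 2 * cr := by
      rw [norm_mul]
      simp [Complex.norm_real, _root_.abs_of_nonneg hcr0.le]
    have e2 : ‖(sπ:ℂ) * (z - cw)^3‖ = sπ * ‖z - cw‖^3 := by
      rw [norm_mul, norm_pow]
      simp [Complex.norm_real, _root_.abs_of_nonneg hsπ0.le]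
    rw [norm_mul, norm_div, e1, e2]
  have hule : ∀ z ∈ UH, z.im + b ≤ ‖z - cw‖ := by
    intro z hz
    have him : (z - cw).im = z.im + b := by simp [hcw, Complex.sub_im, Complex.conj_im, hbdef]
    calc z.im + b = |(z - cw).im| := by
          rw [him, _root_.abs_of_pos (add_pos hz hb)]
      _ ≤ ‖z - cw‖ := by exact Complex.abs_im_le_norm _
  -- BddAbove of the Bloch family
  have hBdd : BddAbove (Set.range fun z : UH => (z:ℂ).im * ‖deriv F (z:ℂ)‖) := by
    refine ⟨2 * cr / (sπ * b^2) * M', ?_⟩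
    rintro _ ⟨⟨z, hz⟩, rfl⟩
    simp only
    rw [(hFd z hz).deriv, hnormφ z hz]
    have hz0 : 0 < z.im := hz
    have hle1 : z.im ≤ ‖z - cw‖ := by linarith [hule z hz]
    have hle2 : b ≤ ‖z - cw‖ := by linarith [hule z hz]
    have hnu0 : 0 < ‖z - cw‖ := lt_of_lt_of_le hb hle2
    have hg' : ‖g z‖ ≤ M' := hgM' z hz
    calc z.im * (2 * cr / (sπ * ‖z - cw‖^3) * ‖g z‖)
        ≤ ‖z - cw‖ * (2 * cr / (sπ * ‖z - cw‖^3) * M') := by gcongr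
      _ = 2 * cr / (sπ * ‖z - cw‖^2) * M' := by
          have hab : ‖z - cw‖ ≠ 0 := hnu0.ne'
          field_simp [hsπ0.ne', hab]
      _ ≤ 2 * cr / (sπ * b^2) * M' := by gcongr
  -- extraction at w
  have hkey : w.im * ‖deriv F w‖ ≤ blochSemi F := by
    haveI : Nonempty UH := ⟨⟨w, hw⟩⟩
    exact le_ciSup hBdd (⟨w, hw⟩ : UH)
  have hwcw : ‖w - cw‖ = 2 * b := by
    rw [hcw, Complex.sub_conj]
    simp
    exact abs_of_pos hb
  have hval : w.im * ‖deriv F w‖ = cr * ‖g w‖ / (4 * sπ * b^2) := by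
    rw [(hFd w hw).deriv, hnormφ w hw, hwcw]
    have : (2*b)^3 = 8 * b^3 := by ring
    rw [this]
    field_simp [hsπ0.ne', hb.ne']
    ring
  have hbs : blochSemi F ≤ blochNorm F := by
    rw [blochNorm]
    have := norm_nonneg (F Complex.I)
    linarith
  have hfin : cr * ‖g w‖ / (4 * sπ * b^2) ≤ C := by
    rw [← hval]
    refine hkey.trans (hbs.trans ((hIneq f hH2).trans ?_))
    calc C * hardyNorm f ≤ C * 1 := by gcongr
      _ = C := mul_one C
  -- rpow algebra
  set s : ℝ := b ^ ((1:ℝ)/2) with hs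
  have hs0 : 0 < s := Real.rpow_pos_of_pos hb _
  have hs2 : s ^ 2 = b := by
    rw [hs, ← Real.rpow_natCast (b ^ ((1:ℝ)/2)) 2, ← Real.rpow_mul hb.le]
    norm_num
  have hcrs : cr = b * s := by
    rw [hcr, hs, show ((3:ℝ)/2) = 1 + (1:ℝ)/2 by norm_num, Real.rpow_add hb, Real.rpow_one]
  rw [div_le_iff₀ hs0]
  have hexp : cr * ‖g w‖ ≤ C * (4 * sπ * b^2) := by
    rw [div_le_iff₀ (by positivity)] at hfin
    exact hfin
  rw [hcrs] at hexp
  have h1 : ‖g w‖ * (b * s) ≤ (4 * sπ * C * s) * (b * s) := by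
    calc ‖g w‖ * (b * s) = b * s * ‖g w‖ := by ring
      _ ≤ C * (4 * sπ * b^2) := hexp
      _ = (4 * sπ * C * s) * (b * s) := by rw [← hs2]; ring
  exact le_of_mul_le_mul_right h1 (by positivity)
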